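/- Every generic monic motion polynomial C = P + εQ ∈ 𝔻ℍ[t] of degree n (P, Q ∈ ℍ[t], with P having no nonconstant monic real polynomial factor) admits a factorization C = (t − h₁)(t − h₂) ⋯ (t − hₙ) with h₁, …, hₙ ∈ 𝔻ℍ such that each linear factor t − hᵢ is itself a motion polynomial, i.e. ν(t − hᵢ) ∈ ℝ[t]. -/

import Mathlib

open Polynomial DualNumber

/-- The dual quaternions `ℍ ⊕ εℍ` with `ε` central and `ε² = 0`. -/
abbrev DH : Type := DualNumber (Quaternion ℝ)

/-- Conjugation of a dual quaternion: quaternion conjugation in both components. -/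
def dconj (x : DH) : DH := (star x.fst, star x.snd)

/-- Coefficientwise conjugation of a left polynomial over the dual quaternions. -/
noncomputable def dpconj (p : Polynomial DH) : Polynomial DH :=
  ⟨AddMonoidAlgebra.ofCoeff (Finsupp.mapRange dconj (by simp [dconj]; rfl) p.toFinsupp.coeff)⟩

@[simp] lemma dconj_fst (x : DH) : (dconj x).fst = star x.fst := rfl
@[simp] lemma dconj_snd (x : DH) : (dconj x).snd = star x.snd := rfl

@[simp] lemma dconj_zero : dconj (0 : DH) = 0 := by
  apply TrivSqZeroExt.ext <;> simp [dconj]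

@[simp] lemma dconj_one : dconj (1 : DH) = 1 := by
  apply TrivSqZeroExt.ext <;> simp [dconj]

lemma dconj_add (x y : DH) : dconj (x + y) = dconj x + dconj y := by
  apply TrivSqZeroExt.ext <;> simp [dconj] <;> rfl

lemma dconj_mul (x y : DH) : dconj (x * y) = dconj y * dconj x := by
  apply TrivSqZeroExt.ext <;>
    simp [dconj, TrivSqZeroExt.fst_mul, TrivSqZeroExt.snd_mul, op_smul_eq_mul, smul_eq_mul,
      add_comm] <;> rfl

lemma dconj_dconj (x : DH) : dconj (dconj x) = x := by
  apply TrivSqZeroExt.ext <;> simp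

@[simp] lemma coeff_dpconj (p : Polynomial DH) (n : ℕ) :
    (dpconj p).coeff n = dconj (p.coeff n) := rfl

noncomputable section

abbrev Quat := Quaternion ℝ

/-- coefficientwise quaternion conjugation -/
noncomputable def qpconj (p : Polynomial Quat) : Polynomial Quat :=
  ⟨AddMonoidAlgebra.ofCoeff (Finsupp.mapRange star (star_zero _) p.toFinsupp.coeff)⟩

@[simp] lemma coeff_qpconj (p : Polynomial Quat) (n : ℕ) :
    (qpconj p).coeff n = star (p.coeff n) := rfl

lemma dpconj_add (p q : Polynomial DH) : dpconj (p + q) = dpconj p + dpconj q := by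
  apply Polynomial.ext; intro n
  simp [dconj_add]

lemma qpconj_add (p q : Polynomial Quat) : qpconj (p + q) = qpconj p + qpconj q := by
  apply Polynomial.ext; intro n
  simp

lemma dconj_neg (x : DH) : dconj (-x) = -dconj x := by
  apply TrivSqZeroExt.ext <;> simp

lemma dconj_sum {α : Type*} (s : Finset α) (f : α → DH) :
    dconj (∑ x ∈ s, f x) = ∑ x ∈ s, dconj (f x) :=
  map_sum (AddMonoidHom.mk' dconj dconj_add) f s

lemma qstar_sum {α : Type*} (s : Finset α) (f : α → Quat) :
    star (∑ x ∈ s, f x) = ∑ x ∈ s, star (f x) :=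
  map_sum (AddMonoidHom.mk' (star : Quat → Quat) star_add) f s

lemma dpconj_mul (p q : Polynomial DH) : dpconj (p * q) = dpconj q * dpconj p := by
  apply Polynomial.ext; intro n
  rw [coeff_dpconj, coeff_mul, coeff_mul, dconj_sum, ← Finset.Nat.sum_antidiagonal_swap]
  exact Finset.sum_congr rfl fun x _ => by simp [dconj_mul]

lemma qpconj_mul (p q : Polynomial Quat) : qpconj (p * q) = qpconj q * qpconj p := by
  apply Polynomial.ext; intro n
  rw [coeff_qpconj, coeff_mul, coeff_mul, qstar_sum, ← Finset.Nat.sum_antidiagonal_swap]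
  exact Finset.sum_congr rfl fun x _ => by simp

@[simp] lemma dpconj_C (a : DH) : dpconj (Polynomial.C a) = Polynomial.C (dconj a) := by
  apply Polynomial.ext; intro n
  simp only [coeff_dpconj, coeff_C]
  split <;> simp

@[simp] lemma dpconj_X : dpconj (X : Polynomial DH) = X := by
  apply Polynomial.ext; intro n
  simp only [coeff_dpconj, coeff_X]
  split <;> simp

lemma dpconj_sub (p q : Polynomial DH) : dpconj (p - q) = dpconj p - dpconj q := by
  apply Polynomial.ext; intro n
  simp only [coeff_dpconj, coeff_sub, sub_eq_add_neg, dconj_add, dconj_neg, coeff_add, coeff_neg]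

lemma dpconj_X_sub_C (h : DH) :
    dpconj (X - Polynomial.C h) = X - Polynomial.C (dconj h) := by
  rw [dpconj_sub, dpconj_X, dpconj_C]

/-- projection to the primal part, as a ring hom -/
def phom : DH →+* Quat :=
  (TrivSqZeroExt.fstHom ℝ Quat Quat).toRingHom

@[simp] lemma phom_apply (x : DH) : phom x = x.fst := rfl

lemma phom_algebraMap (r : ℝ) : phom (algebraMap ℝ DH r) = algebraMap ℝ Quat r := rfl

lemma phom_dconj (x : DH) : phom (dconj x) = star (phom x) := rfl

lemma map_phom_dpconj (p : Polynomial DH) :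
    (dpconj p).map phom = qpconj (p.map phom) := by
  apply Polynomial.ext; intro n
  simp [coeff_map]

lemma map_phom_algebraMap (N : Polynomial ℝ) :
    (N.map (algebraMap ℝ DH)).map phom = N.map (algebraMap ℝ Quat) := by
  rw [Polynomial.map_map]; rfl

@[simp] lemma star_algebraMap_quat (r : ℝ) :
    star (algebraMap ℝ Quat r) = algebraMap ℝ Quat r :=
  Quaternion.star_coe r

@[simp] lemma dconj_algebraMap (r : ℝ) : dconj (algebraMap ℝ DH r) = algebraMap ℝ DH r := by
  apply TrivSqZeroExt.ext
  · exact star_algebraMap_quat r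
  · show star (0 : Quat) = 0
    simp

lemma dpconj_map_algebraMap (N : Polynomial ℝ) :
    dpconj (N.map (algebraMap ℝ DH)) = N.map (algebraMap ℝ DH) := by
  apply Polynomial.ext; intro n
  simp [coeff_map]

lemma qpconj_map_algebraMap (N : Polynomial ℝ) :
    qpconj (N.map (algebraMap ℝ Quat)) = N.map (algebraMap ℝ Quat) := by
  apply Polynomial.ext; intro n
  simp [coeff_map]

lemma C_comm_of_central {A : Type*} [Ring A] (a : A) (h : ∀ b, a * b = b * a)
    (t : Polynomial A) : Polynomial.C a * t = t * Polynomial.C a := by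
  apply Polynomial.ext; intro n
  rw [coeff_C_mul, coeff_mul_C, h]

/-- a polynomial with scalar (real) coefficients commutes with everything -/
lemma map_algebraMap_comm {A : Type*} [Ring A] [Algebra ℝ A] (N : Polynomial ℝ)
    (q : Polynomial A) :
    N.map (algebraMap ℝ A) * q = q * N.map (algebraMap ℝ A) := by
  induction N using Polynomial.induction_on' with
  | add f g hf hg => rw [Polynomial.map_add, add_mul, mul_add, hf, hg]
  | monomial m r =>
      rw [Polynomial.map_monomial, ← Polynomial.C_mul_X_pow_eq_monomial]
      calc Polynomial.C (algebraMap ℝ A r) * X ^ m * q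
          = Polynomial.C (algebraMap ℝ A r) * (q * X ^ m) := by rw [mul_assoc, X_pow_mul]
        _ = Polynomial.C (algebraMap ℝ A r) * q * X ^ m := by rw [mul_assoc]
        _ = q * (Polynomial.C (algebraMap ℝ A r) * X ^ m) := by
              rw [C_comm_of_central _ (fun b => Algebra.commutes r b) q, mul_assoc]

/-- lift a DH-polynomial all of whose coefficients are real scalars -/
lemma exists_real_lift (G : Polynomial DH)
    (h : ∀ i, ∃ r : ℝ, G.coeff i = algebraMap ℝ DH r) :
    ∃ N : Polynomial ℝ, G = N.map (algebraMap ℝ DH) := by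
  refine ⟨∑ i ∈ G.support, Polynomial.monomial i (Classical.choose (h i)), ?_⟩
  rw [Polynomial.map_sum]
  conv_lhs => rw [G.as_sum_support]
  refine Finset.sum_congr rfl fun i _ => ?_
  rw [Polynomial.map_monomial, ← Classical.choose_spec (h i)]

lemma quat_sym (a b : Quat) :
    a * star b + b * star a = star a * b + star b * a := by
  ext <;> simp [Quaternion.re_mul, Quaternion.imI_mul, Quaternion.imJ_mul,
    Quaternion.imK_mul] <;> ring

/-- ν(x) = x·x̄ has both components real -/
lemma nu_real (x : DH) :
    ∃ u v : ℝ, (x * dconj x).fst = (u : Quat) ∧ (x * dconj x).snd = (v : Quat) := by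
  refine ⟨Quaternion.normSq x.fst, 2 * (x.fst * star x.snd).re, ?_, ?_⟩
  · show x.fst * star x.fst = _
    rw [Quaternion.self_mul_star]
  · show x.fst * star x.snd + x.snd * star x.fst = _
    have h1 : x.snd * star x.fst = star (x.fst * star x.snd) := by
      rw [star_mul, star_star]
    rw [h1, Quaternion.self_add_star']

lemma central_of_coe (z : DH) (u v : ℝ) (hf : z.fst = (u : Quat)) (hs : z.snd = (v : Quat))
    (y : DH) : z * y = y * z := by
  apply TrivSqZeroExt.ext
  · show z.fst * y.fst = y.fst * z.fst
    rw [hf, Quaternion.coe_commutes]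
  · show z.fst * y.snd + z.snd * y.fst = y.fst * z.snd + y.snd * z.fst
    rw [hf, hs, Quaternion.coe_commutes, ← Quaternion.coe_commutes (r := v), add_comm]

lemma nu_central (x y : DH) : (x * dconj x) * y = y * (x * dconj x) := by
  obtain ⟨u, v, hf, hs⟩ := nu_real x
  exact central_of_coe _ u v hf hs y

lemma nu_comm (x : DH) : dconj x * x = x * dconj x := by
  apply TrivSqZeroExt.ext
  · show star x.fst * x.fst = x.fst * star x.fst
    rw [star_comm_self']
  · show star x.fst * x.snd + star x.snd * x.fst
        = x.fst * star x.snd + x.snd * star x.fst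
    exact (quat_sym x.fst x.snd).symm

lemma alg_DH_injective : Function.Injective (algebraMap ℝ DH) := by
  intro r s h
  have := congrArg (fun x : DH => (TrivSqZeroExt.fst x).re) h
  simpa [TrivSqZeroExt.algebraMap_eq_inl', TrivSqZeroExt.fst_inl] using this

lemma qpconj_eq_zero {p : Polynomial Quat} : qpconj p = 0 ↔ p = 0 := by
  constructor <;> intro h <;> apply Polynomial.ext <;> intro n
  · have := congrArg (fun t : Polynomial Quat => t.coeff n) h
    simp only [coeff_qpconj, coeff_zero, star_eq_zero] at this ⊢
    exact this
  · rw [h]; simp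

lemma natDegree_qpconj (p : Polynomial Quat) : (qpconj p).natDegree = p.natDegree := by
  apply le_antisymm
  · rw [natDegree_le_iff_coeff_eq_zero]
    intro N hN
    rw [coeff_qpconj, coeff_eq_zero_of_natDegree_lt hN, star_zero]
  · rw [natDegree_le_iff_coeff_eq_zero]
    intro N hN
    have := coeff_eq_zero_of_natDegree_lt (p := qpconj p) hN
    rw [coeff_qpconj, star_eq_zero] at this
    exact this

lemma monic_mul_cancel {q A B : Polynomial DH} (hq : q.Monic) (h : q * A = q * B) :
    A = B := by
  by_contra hne
  have h0 : q * (A - B) = 0 := by rw [mul_sub, h, sub_self]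
  have := leadingCoeff_monic_mul hq (q := A - B)
  rw [h0, leadingCoeff_zero] at this
  exact hne (sub_eq_zero.mp (leadingCoeff_eq_zero.mp this.symm))

lemma key_expand {A : Type*} [Ring A] [Algebra ℝ A] (M : Polynomial ℝ)
    (W H R Hc Rc : Polynomial A)
    (h : (M.map (algebraMap ℝ A) * H + R) * (Hc * M.map (algebraMap ℝ A) + Rc)
        = M.map (algebraMap ℝ A) * W) :
    R * Rc = M.map (algebraMap ℝ A)
        * (W - H * Hc * M.map (algebraMap ℝ A) - H * Rc - R * Hc) := by
  set Mq := M.map (algebraMap ℝ A) with hMq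
  have hc : ∀ q : Polynomial A, Mq * q = q * Mq := fun q => map_algebraMap_comm M q
  have expand : (Mq * H + R) * (Hc * Mq + Rc)
      = Mq * (H * Hc * Mq) + Mq * (H * Rc) + Mq * (R * Hc) + R * Rc := by
    rw [add_mul, mul_add, mul_add, ← mul_assoc R Hc Mq, ← hc (R * Hc)]
    noncomm_ring
  rw [expand] at h
  rw [mul_sub, mul_sub, mul_sub, ← h]
  noncomm_ring

lemma alg_Q_injective : Function.Injective (algebraMap ℝ Quat) :=
  fun r s h => Quaternion.coe_injective h

lemma monic_right_factor {g : Polynomial DH} {c : DH} {m : ℕ}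
    (hf : (g * (X - Polynomial.C c)).Monic)
    (hdeg : (g * (X - Polynomial.C c)).natDegree = m + 1) :
    g.Monic ∧ g.natDegree = m := by
  have hg0 : g ≠ 0 := by
    rintro rfl
    rw [zero_mul] at hf
    exact hf.ne_zero rfl
  have hlc : g.leadingCoeff * (X - Polynomial.C c).leadingCoeff ≠ 0 := by
    rw [leadingCoeff_X_sub_C, mul_one]
    exact mt leadingCoeff_eq_zero.mp hg0
  have hl : (g * (X - Polynomial.C c)).leadingCoeff = g.leadingCoeff := by
    rw [leadingCoeff_mul' hlc, leadingCoeff_X_sub_C, mul_one]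
  have hnd : (g * (X - Polynomial.C c)).natDegree = g.natDegree + 1 := by
    rw [natDegree_mul' hlc, natDegree_X_sub_C]
  constructor
  · rw [Monic, ← hl]; exact hf
  · omega

lemma one_le_degree_of_natDegree_pos {M : Polynomial ℝ} (h : 0 < M.natDegree) :
    1 ≤ M.degree := by
  have hM0 : M ≠ 0 := fun h0 => by simp [h0] at h
  rw [degree_eq_natDegree hM0]
  exact_mod_cast h

set_option maxHeartbeats 1000000 in
lemma factor_step (F : Polynomial DH) (n : ℕ) (hmon : F.Monic) (hdeg : F.natDegree = n + 1)
    (N : Polynomial ℝ) (hN : F * dpconj F = N.map (algebraMap ℝ DH))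
    (hgen : ¬ ∃ M : Polynomial ℝ, M.Monic ∧ 1 ≤ M.degree ∧
      M.map (algebraMap ℝ Quat) ∣ F.map phom) :
    ∃ (F₁ : Polynomial DH) (h : DH) (M : Polynomial ℝ),
      F = F₁ * (X - Polynomial.C h) ∧ F₁.Monic ∧ F₁.natDegree = n ∧
      (X - Polynomial.C h) * dpconj (X - Polynomial.C h) = M.map (algebraMap ℝ DH) ∧
      (∃ N₁ : Polynomial ℝ, F₁ * dpconj F₁ = N₁.map (algebraMap ℝ DH)) ∧
      (¬ ∃ M₂ : Polynomial ℝ, M₂.Monic ∧ 1 ≤ M₂.degree ∧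
        M₂.map (algebraMap ℝ Quat) ∣ F₁.map phom) := by
  classical
  set P := F.map phom with hPdef
  have hPmon : P.Monic := hmon.map phom
  have hPdeg : P.natDegree = n + 1 := by rw [hPdef, hmon.natDegree_map, hdeg]
  have hmapP : P * qpconj P = N.map (algebraMap ℝ Quat) := by
    have h2 := congrArg (Polynomial.map phom) hN
    rwa [Polynomial.map_mul, map_phom_dpconj, map_phom_algebraMap] at h2
  -- degree and monicity of N
  have hP0 : P ≠ 0 := hPmon.ne_zero
  have hqPmon : (qpconj P).Monic := by
    have : (qpconj P).leadingCoeff = star P.leadingCoeff := by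
      rw [leadingCoeff, leadingCoeff, natDegree_qpconj, coeff_qpconj]
    rw [Monic, this, hPmon.leadingCoeff, star_one]
  have hPP : (P * qpconj P).natDegree = 2 * n + 2 := by
    rw [hPmon.natDegree_mul hqPmon, natDegree_qpconj, hPdeg]; ring
  have hNdeg : N.natDegree = 2 * n + 2 := by
    have := natDegree_map_eq_of_injective alg_Q_injective N
    rw [← hmapP, hPP] at this
    exact this.symm
  have hNmon : N.Monic := by
    have hm : (N.map (algebraMap ℝ Quat)).Monic := by rw [← hmapP]; exact hPmon.mul hqPmon
    have : algebraMap ℝ Quat N.leadingCoeff = algebraMap ℝ Quat 1 := by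
      rw [map_one, ← hm.leadingCoeff]
      rw [leadingCoeff, leadingCoeff, natDegree_map_eq_of_injective alg_Q_injective, coeff_map]
    rw [Monic, ← alg_Q_injective this]
  have hN0 : N ≠ 0 := hNmon.ne_zero
  have hNnotunit : ¬ IsUnit N := not_isUnit_of_natDegree_pos N (by omega)
  -- irreducible monic factor M
  obtain ⟨w, hwirr, hwdvd⟩ := WfDvdMonoid.exists_irreducible_factor hNnotunit hN0
  have hw0 : w ≠ 0 := hwirr.ne_zero
  set M : Polynomial ℝ := w * Polynomial.C w.leadingCoeff⁻¹ with hMdef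
  have hMmon : M.Monic := monic_mul_leadingCoeff_inv hw0
  have hMdvd : M ∣ N := by
    obtain ⟨t, ht⟩ := hwdvd
    exact ⟨Polynomial.C w.leadingCoeff * t, by
      rw [hMdef, mul_assoc, ← mul_assoc (Polynomial.C w.leadingCoeff⁻¹), ← Polynomial.C_mul,
        inv_mul_cancel₀ (leadingCoeff_ne_zero.mpr hw0), Polynomial.C_1, one_mul, ← ht]⟩
  have hMndle : M.natDegree ≤ 2 := by
    have h1 : M.natDegree = w.natDegree := by
      rw [hMdef, natDegree_mul hw0 (by simp [leadingCoeff_ne_zero.mpr hw0]), natDegree_C,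
        add_zero]
    rw [h1]
    exact hwirr.natDegree_le_two
  have hMnd1 : 1 ≤ M.natDegree := by
    by_contra hlt
    have : M.natDegree = 0 := by omega
    have hM1 : M = 1 := eq_one_of_monic_natDegree_zero hMmon this
    have : IsUnit w := by
      have : w = Polynomial.C w.leadingCoeff := by
        have := congrArg (· * Polynomial.C w.leadingCoeff) hM1
        simpa [hMdef, mul_assoc, ← Polynomial.C_mul,
          inv_mul_cancel₀ (leadingCoeff_ne_zero.mpr hw0)] using this
      rw [this]
      exact isUnit_C.mpr (isUnit_iff_ne_zero.mpr (leadingCoeff_ne_zero.mpr hw0))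
    exact hwirr.not_isUnit this
  obtain ⟨N₁, hN₁⟩ := hMdvd
  -- division of F by M'
  set M' : Polynomial DH := M.map (algebraMap ℝ DH) with hM'def
  have hM'mon : M'.Monic := hMmon.map _
  have hM'nd : M'.natDegree = M.natDegree := hMmon.natDegree_map _
  have hM'ne1 : M' ≠ 1 := by
    intro h1
    rw [h1, natDegree_one] at hM'nd
    omega
  set H := F /ₘ M' with hHdef
  set R := F %ₘ M' with hRdef
  have hdiv : F = M' * H + R := by
    conv_lhs => rw [← modByMonic_add_div F M']
    rw [add_comm]
  have hRnd : R.natDegree < M.natDegree := by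
    have h2 := natDegree_modByMonic_lt F hM'mon hM'ne1
    rw [← hRdef] at h2
    omega
  have hcomm : ∀ q : Polynomial DH, M' * q = q * M' := fun q => map_algebraMap_comm M q
  -- primal side
  set Mq : Polynomial Quat := M.map (algebraMap ℝ Quat) with hMqdef
  have hMqc : ∀ q : Polynomial Quat, Mq * q = q * Mq := fun q => map_algebraMap_comm M q
  set Rp := R.map phom with hRpdef
  set Hp := H.map phom with hHpdef
  have hPdecomp : P = Mq * Hp + Rp := by
    have := congrArg (Polynomial.map phom) hdiv
    rwa [Polynomial.map_add, Polynomial.map_mul, map_phom_algebraMap] at this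
  have hRp0 : Rp ≠ 0 := by
    intro h0
    refine hgen ⟨M, hMmon, one_le_degree_of_natDegree_pos (by omega), Hp, ?_⟩
    rw [hPdecomp, h0, add_zero]
  -- the ℍ-side degree argument
  have hkeyQ : Rp * qpconj Rp = Mq *
      (N₁.map (algebraMap ℝ Quat) - Hp * qpconj Hp * Mq - Hp * qpconj Rp - Rp * qpconj Hp) := by
    apply key_expand
    have hq : qpconj P = qpconj Hp * Mq + qpconj Rp := by
      rw [hPdecomp, qpconj_add, qpconj_mul, qpconj_map_algebraMap]
    rw [← hq, ← hPdecomp, hmapP, hN₁, Polynomial.map_mul]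
  have hqRp0 : qpconj Rp ≠ 0 := fun h => hRp0 (qpconj_eq_zero.mp h)
  have hprod0 : Rp * qpconj Rp ≠ 0 := mul_ne_zero hRp0 hqRp0
  have hMq0 : Mq ≠ 0 := (hMmon.map _).ne_zero
  set Ap := N₁.map (algebraMap ℝ Quat) - Hp * qpconj Hp * Mq - Hp * qpconj Rp - Rp * qpconj Hp
    with hApdef
  have hAp0 : Ap ≠ 0 := by
    intro h0
    rw [h0, mul_zero] at hkeyQ
    exact hprod0 hkeyQ
  have hdeg1 : Rp.natDegree + Rp.natDegree = M.natDegree + Ap.natDegree := by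
    have h1 := natDegree_mul hRp0 hqRp0
    rw [natDegree_qpconj] at h1
    have h2 := natDegree_mul hMq0 hAp0
    have h3 : Mq.natDegree = M.natDegree := hMmon.natDegree_map _
    rw [hkeyQ, h2, h3] at h1
    omega
  have hRpnd : Rp.natDegree + 1 ≤ M.natDegree := by
    have h4 : Rp.natDegree ≤ R.natDegree := by
      rw [hRpdef]; exact natDegree_map_le
    omega
  have hM2 : M.natDegree = 2 := by omega
  have hRp1 : Rp.natDegree = 1 := by omega
  have hr1fst : (R.coeff 1).fst ≠ 0 := by
    have h5 : Rp.coeff 1 ≠ 0 := by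
      rw [← hRp1]
      exact mt leadingCoeff_eq_zero.mp hRp0
    rw [hRpdef, coeff_map] at h5
    exact h5
  -- the linear factor
  set r1 : DH := R.coeff 1 with hr1def
  have hr1unit : IsUnit r1 :=
    TrivSqZeroExt.isUnit_iff_isUnit_fst.mpr (isUnit_iff_ne_zero.mpr hr1fst)
  obtain ⟨u, hu⟩ := hr1unit
  set hh : DH := -(↑u⁻¹ * R.coeff 0) with hhdef
  have hRfact : R = Polynomial.C r1 * (X - Polynomial.C hh) := by
    have hRnd1 : R.natDegree ≤ 1 := by omega
    have heq := eq_X_add_C_of_natDegree_le_one hRnd1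
    have hr1h : r1 * hh = -(R.coeff 0) := by
      rw [hhdef, mul_neg, ← mul_assoc, ← hu, Units.mul_inv, one_mul]
    rw [mul_sub, ← Polynomial.C_mul, hr1h, Polynomial.C_neg, sub_neg_eq_add]
    exact heq
  have hdR : dpconj R = (X - Polynomial.C (dconj hh)) * Polynomial.C (dconj r1) := by
    rw [hRfact, dpconj_mul, dpconj_X_sub_C, dpconj_C]
  -- DH-side key identity
  set Ad := N₁.map (algebraMap ℝ DH) - H * dpconj H * M' - H * dpconj R - R * dpconj H
    with hAddef
  have hkeyD : R * dpconj R = M' * Ad := by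
    rw [hAddef]
    apply key_expand
    have hq : dpconj F = dpconj H * M' + dpconj R := by
      conv_lhs => rw [hdiv]
      rw [dpconj_add, dpconj_mul, dpconj_map_algebraMap]
    rw [← hq, ← hdiv, hN, hN₁, Polynomial.map_mul]
  set G : Polynomial DH := (X - Polynomial.C hh) * (X - Polynomial.C (dconj hh)) with hGdef
  have hGmon : G.Monic := (monic_X_sub_C hh).mul (monic_X_sub_C (dconj hh))
  have hGnd : G.natDegree = 2 := by
    rw [hGdef, (monic_X_sub_C hh).natDegree_mul (monic_X_sub_C (dconj hh)),
      natDegree_X_sub_C, natDegree_X_sub_C]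
  have hRG : R * dpconj R = Polynomial.C r1 * G * Polynomial.C (dconj r1) := by
    rw [hdR, hRfact, hGdef]
    simp only [mul_assoc]
  have hEq : Polynomial.C r1 * G * Polynomial.C (dconj r1) = M' * Ad := by
    rw [← hRG, hkeyD]
  have hu' : dconj r1 * dconj (↑u⁻¹ : DH) = 1 := by
    rw [← dconj_mul, ← hu, Units.inv_mul, dconj_one]
  have h6 : (↑u⁻¹ : DH) * r1 = 1 := by rw [← hu, Units.inv_mul]
  have hG_M : G = M' * (Polynomial.C (↑u⁻¹ : DH) * Ad * Polynomial.C (dconj (↑u⁻¹ : DH))) := by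
    calc G = Polynomial.C ((↑u⁻¹ : DH) * r1) * G
            * Polynomial.C (dconj r1 * dconj (↑u⁻¹ : DH)) := by
          rw [h6, hu', Polynomial.C_1, one_mul, mul_one]
      _ = Polynomial.C (↑u⁻¹ : DH) * (Polynomial.C r1 * G * Polynomial.C (dconj r1))
            * Polynomial.C (dconj (↑u⁻¹ : DH)) := by
          rw [Polynomial.C_mul, Polynomial.C_mul]
          simp only [mul_assoc]
      _ = Polynomial.C (↑u⁻¹ : DH) * (M' * Ad) * Polynomial.C (dconj (↑u⁻¹ : DH)) := by
          rw [hEq]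
      _ = M' * (Polynomial.C (↑u⁻¹ : DH) * Ad * Polynomial.C (dconj (↑u⁻¹ : DH))) := by
          rw [← mul_assoc, ← mul_assoc, ← hcomm (Polynomial.C (↑u⁻¹ : DH))]
          simp only [mul_assoc]
  set B := Polynomial.C (↑u⁻¹ : DH) * Ad * Polynomial.C (dconj (↑u⁻¹ : DH)) with hBdef
  have hB0 : B ≠ 0 := by
    intro h0
    rw [h0, mul_zero] at hG_M
    exact hGmon.ne_zero hG_M
  have hndB : B.natDegree = 0 := by
    have hlcB : M'.leadingCoeff * B.leadingCoeff ≠ 0 := by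
      rw [hM'mon.leadingCoeff, one_mul]
      exact leadingCoeff_ne_zero.mpr hB0
    have h7 := natDegree_mul' hlcB
    rw [← hG_M, hGnd, hM'nd, hM2] at h7
    omega
  have hGM' : G = M' := by
    obtain ⟨b, hb⟩ : ∃ b, B = Polynomial.C b := ⟨B.coeff 0, eq_C_of_natDegree_eq_zero hndB⟩
    have h8 : G.coeff 2 = 1 := by
      rw [← hGnd]; exact hGmon.coeff_natDegree
    have h9 : M'.coeff 2 = 1 := by
      have := hM'mon.coeff_natDegree
      rwa [hM'nd, hM2] at this
    have h10 : G.coeff 2 = M'.coeff 2 * b := by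
      rw [hG_M, hb, coeff_mul_C]
    rw [h8, h9, one_mul] at h10
    rw [hG_M, hb, ← h10, Polynomial.C_1, mul_one]
  have hG' : (X - Polynomial.C (dconj hh)) * (X - Polynomial.C hh) = M' := by
    rw [← hGM', hGdef]
    have hx1 : ∀ a b : DH, (X - Polynomial.C a) * (X - Polynomial.C b)
        = X ^ 2 - (Polynomial.C a + Polynomial.C b) * X + Polynomial.C (a * b) := by
      intro a b
      have hxc : (X : Polynomial DH) * Polynomial.C b = Polynomial.C b * X := X_mul
      rw [sub_mul, mul_sub, mul_sub, hxc, ← Polynomial.C_mul]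
      noncomm_ring
    rw [hx1, hx1, nu_comm hh, add_comm (Polynomial.C (dconj hh)) (Polynomial.C hh)]
  -- assemble F₁
  have hF1 : F = (H * (X - Polynomial.C (dconj hh)) + Polynomial.C r1)
      * (X - Polynomial.C hh) := by
    conv_lhs => rw [hdiv]
    rw [hcomm H, ← hG', hRfact, add_mul, mul_assoc]
  set F₁ := H * (X - Polynomial.C (dconj hh)) + Polynomial.C r1 with hF₁def
  obtain ⟨hF₁mon, hF₁nd⟩ := monic_right_factor (hF1 ▸ hmon) (hF1 ▸ hdeg)
  have hfactm : (X - Polynomial.C hh) * dpconj (X - Polynomial.C hh)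
      = M.map (algebraMap ℝ DH) := by
    rw [dpconj_X_sub_C, ← hGdef, hGM']
  have hmot : F₁ * dpconj F₁ = N₁.map (algebraMap ℝ DH) := by
    apply monic_mul_cancel hM'mon
    have h11 : F * dpconj F = M' * (F₁ * dpconj F₁) := by
      conv_lhs => rw [hF1]
      rw [dpconj_mul, dpconj_X_sub_C]
      calc F₁ * (X - Polynomial.C hh) * ((X - Polynomial.C (dconj hh)) * dpconj F₁)
          = F₁ * G * dpconj F₁ := by rw [hGdef]; simp only [mul_assoc]
        _ = F₁ * M' * dpconj F₁ := by rw [hGM']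
        _ = M' * (F₁ * dpconj F₁) := by rw [← hcomm F₁]; simp only [mul_assoc]
    rw [← h11, hN, hN₁, Polynomial.map_mul]
  have hgen₁ : ¬ ∃ M₂ : Polynomial ℝ, M₂.Monic ∧ 1 ≤ M₂.degree ∧
      M₂.map (algebraMap ℝ Quat) ∣ F₁.map phom := by
    rintro ⟨M₂, hM₂mon, hM₂deg, K, hK⟩
    refine hgen ⟨M₂, hM₂mon, hM₂deg, K * (X - Polynomial.C (phom hh)), ?_⟩
    have h12 : P = F₁.map phom * (X - Polynomial.C (phom hh)) := by
      rw [hPdef, hF1, Polynomial.map_mul, Polynomial.map_sub, map_X, map_C]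
    rw [h12, hK, mul_assoc]
  exact ⟨F₁, hh, M, hF1, hF₁mon, hF₁nd, hfactm, ⟨N₁, hmot⟩, hgen₁⟩

theorem main_aux : ∀ (n : ℕ) (F : Polynomial DH), F.Monic → F.natDegree = n →
    (∀ i, ∃ r : ℝ, (F * dpconj F).coeff i = algebraMap ℝ DH r) →
    (¬ ∃ M : Polynomial ℝ, M.Monic ∧ 1 ≤ M.degree ∧
        M.map (algebraMap ℝ Quat) ∣ F.map phom) →
    ∃ h : Fin n → DH, F = (List.ofFn fun i => X - Polynomial.C (h i)).prod ∧
      ∀ i : Fin n, ∃ Mi : Polynomial ℝ,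
        (X - Polynomial.C (h i)) * dpconj (X - Polynomial.C (h i))
          = Mi.map (algebraMap ℝ DH)
  | 0, F, hmon, hdeg, _, _ => by
      refine ⟨Fin.elim0, ?_, fun i => i.elim0⟩
      have : F = 1 := eq_one_of_monic_natDegree_zero hmon hdeg
      simp [this]
  | (n+1), F, hmon, hdeg, hmotion, hgen => by
      obtain ⟨N, hN⟩ := exists_real_lift _ hmotion
      obtain ⟨F₁, hh, M, hF1, hF₁mon, hF₁nd, hfact, ⟨N₁, hN₁⟩, hgen₁⟩ :=
        factor_step F n hmon hdeg N hN hgen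
      have hmot₁ : ∀ i, ∃ r : ℝ, (F₁ * dpconj F₁).coeff i = algebraMap ℝ DH r :=
        fun i => ⟨N₁.coeff i, by rw [hN₁, coeff_map]⟩
      obtain ⟨g, hgprod, hgmot⟩ := main_aux n F₁ hF₁mon hF₁nd hmot₁ hgen₁
      refine ⟨Fin.snoc g hh, ?_, ?_⟩
      · rw [List.ofFn_succ', List.prod_concat]
        simp only [Fin.snoc_castSucc, Fin.snoc_last]
        rw [← hgprod, ← hF1]
      · intro i
        refine Fin.lastCases ?_ ?_ i
        · simpa [Fin.snoc_last] using ⟨M, hfact⟩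
        · intro j
          simpa [Fin.snoc_castSucc] using hgmot j

/-- Every generic monic motion polynomial `F = P + εQ` of degree `n` admits a factorization
into `n` monic linear factors, each of which is itself a motion polynomial. -/
theorem generic_motion_polynomial_factorization
    (P Q : Polynomial (Quaternion ℝ)) (F : Polynomial DH) (n : ℕ)
    (hF : ∀ i, F.coeff i = (P.coeff i, Q.coeff i))
    (hFmonic : F.Monic) (hdeg : F.natDegree = n)
    (hmotion : ∀ i, ∃ r : ℝ, (F * dpconj F).coeff i = algebraMap ℝ DH r)
    (hne : F * dpconj F ≠ 0)
    (hgen : ¬ ∃ M : Polynomial ℝ, M.Monic ∧ 1 ≤ M.degree ∧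
      M.map (algebraMap ℝ (Quaternion ℝ)) ∣ P) :
    ∃ h : Fin n → DH,
      F = (List.ofFn fun i => X - Polynomial.C (h i)).prod ∧
      ∀ i : Fin n, ∀ j : ℕ, ∃ r : ℝ,
        ((X - Polynomial.C (h i)) * dpconj (X - Polynomial.C (h i))).coeff j
          = algebraMap ℝ DH r := by
  have hPF : F.map phom = P := by
    apply Polynomial.ext; intro i
    rw [coeff_map, hF i]
    rfl
  have hgen' : ¬ ∃ M : Polynomial ℝ, M.Monic ∧ 1 ≤ M.degree ∧
      M.map (algebraMap ℝ Quat) ∣ F.map phom := by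
    rwa [hPF]
  obtain ⟨h, hprod, hmot⟩ := main_aux n F hFmonic hdeg hmotion hgen'
  refine ⟨h, hprod, fun i j => ?_⟩
  obtain ⟨Mi, hMi⟩ := hmot i
  exact ⟨Mi.coeff j, by rw [hMi, coeff_map]⟩
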